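/- Poincaré inequality without boundary condition at x=1: under the degeneracy assumptions with μ < 2, every u in the weighted space W¹_a (locally absolutely continuous with √a u' ∈ L², no vanishing at 1) satisfies ‖u‖²_{L²(0,1)} ≤ 2 u(1)² + C'_a ∫₀¹ a|u'|² dx, where C'_a = (1/a(1)) min{4, 2/(2-μ)}. -/

import Mathlib

open MeasureTheory Set


lemma my_cs {ν : Measure ℝ} (f g : ℝ → ℝ)
    (hf : AEStronglyMeasurable f ν) (hg : AEStronglyMeasurable g ν)
    (hf2 : Integrable (fun x => f x ^ 2) ν) (hg2 : Integrable (fun x => g x ^ 2) ν) :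
    (∫ x, f x * g x ∂ν) ^ 2 ≤ (∫ x, f x ^ 2 ∂ν) * ∫ x, g x ^ 2 ∂ν := by
  have hfg : Integrable (fun x => f x * g x) ν := by
    refine Integrable.mono' ((hf2.add hg2).const_mul (1/2)) (hf.mul hg) ?_
    filter_upwards with x
    simp only [Pi.add_apply, norm_mul, Real.norm_eq_abs]
    nlinarith [sq_nonneg (|f x| - |g x|), sq_abs (f x), sq_abs (g x),
      abs_nonneg (f x), abs_nonneg (g x)]
  have key : ∀ t : ℝ, 0 ≤ (∫ x, g x ^ 2 ∂ν) * (t * t) + (2 * ∫ x, f x * g x ∂ν) * t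
      + ∫ x, f x ^ 2 ∂ν := by
    intro t
    have hint2 : Integrable (fun x => 2 * t * (f x * g x) + t ^ 2 * g x ^ 2) ν :=
      (hfg.const_mul (2 * t)).add (hg2.const_mul (t ^ 2))
    have h0 : 0 ≤ ∫ x, (f x ^ 2 + (2 * t * (f x * g x) + t ^ 2 * g x ^ 2)) ∂ν := by
      apply integral_nonneg
      intro x
      simp only [Pi.zero_apply]
      nlinarith [sq_nonneg (f x + t * g x)]
    rw [integral_add hf2 hint2,
      integral_add (hfg.const_mul (2 * t)) (hg2.const_mul (t ^ 2)),
      MeasureTheory.integral_const_mul, MeasureTheory.integral_const_mul] at h0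
    nlinarith [h0]
  have hd := discrim_le_zero key
  rw [discrim] at hd
  nlinarith [hd]

lemma my_low (a ad : ℝ → ℝ) (μ : ℝ)
    (hderiv : ∀ x ∈ Set.Ioc (0:ℝ) 1, HasDerivAt a (ad x) x)
    (hpos : ∀ x ∈ Set.Ioc (0:ℝ) 1, 0 < a x)
    (hμ : ∀ x ∈ Set.Ioc (0:ℝ) 1, x * |ad x| ≤ μ * a x) :
    ∀ s ∈ Set.Ioc (0:ℝ) 1, a 1 * s ^ μ ≤ a s := by
  intro s hs
  set h : ℝ → ℝ := fun t => a t * t ^ (-μ) with hh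
  have hmem : ∀ t ∈ Icc s 1, t ∈ Ioc (0:ℝ) 1 := fun t ht => ⟨lt_of_lt_of_le hs.1 ht.1, ht.2⟩
  have hanti : AntitoneOn h (Icc s 1) := by
    apply antitoneOn_of_deriv_nonpos (convex_Icc s 1)
    · intro t ht
      exact (((hderiv t (hmem t ht)).continuousAt).continuousWithinAt).mul
        ((Real.continuousAt_rpow_const t (-μ)
          (Or.inl (ne_of_gt (hmem t ht).1))).continuousWithinAt)
    · intro t ht
      rw [interior_Icc] at ht
      have ht' := hmem t (Ioo_subset_Icc_self ht)
      exact (((hderiv t ht').mul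
        (Real.hasDerivAt_rpow_const (Or.inl (ne_of_gt ht'.1)))).differentiableAt).differentiableWithinAt
    · intro t ht
      rw [interior_Icc] at ht
      have ht' := hmem t (Ioo_subset_Icc_self ht)
      have ht0 : (0:ℝ) < t := ht'.1
      have hda : HasDerivAt h (ad t * t ^ (-μ) + a t * (-μ * t ^ (-μ - 1))) t :=
        (hderiv t ht').mul (Real.hasDerivAt_rpow_const (Or.inl (ne_of_gt ht0)))
      rw [hda.deriv]
      have h1 : t ^ (-μ) = t * t ^ (-μ - 1) := by
        have h1x := Real.rpow_add ht0 1 (-μ - 1)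
        rw [Real.rpow_one, show (1:ℝ) + (-μ - 1) = -μ by ring] at h1x
        exact h1x
      have h2 : (0:ℝ) < t ^ (-μ - 1) := Real.rpow_pos_of_pos ht0 _
      have h3 : ad t * t ^ (-μ) = (t * ad t) * t ^ (-μ - 1) := by rw [h1]; ring
      have h4 : t * ad t ≤ μ * a t := le_trans (by
        have := abs_nonneg (ad t)
        have hle : ad t ≤ |ad t| := le_abs_self _
        nlinarith) (hμ t ht')
      have h5 : a t * (-μ * t ^ (-μ - 1)) = -(μ * a t) * t ^ (-μ - 1) := by ring
      rw [h3, h5]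
      nlinarith [h4, h2]
  have h1s : h 1 ≤ h s := hanti (left_mem_Icc.2 hs.2) (right_mem_Icc.2 hs.2) hs.2
  have hs0 : (0:ℝ) < s := hs.1
  have hspow : (0:ℝ) < s ^ μ := Real.rpow_pos_of_pos hs0 _
  have h1v : h 1 = a 1 := by simp [hh, Real.one_rpow]
  have hsv : h s = a s * (s ^ μ)⁻¹ := by
    rw [hh]
    simp [Real.rpow_neg (le_of_lt hs0)]
  rw [h1v, hsv] at h1s
  have hfin := mul_le_mul_of_nonneg_right h1s hspow.le
  rwa [mul_assoc, inv_mul_cancel₀ hspow.ne', mul_one] at hfin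


section Aux2
variable (a ad u ud : ℝ → ℝ) (μ : ℝ)

lemma my_udmeas (huderiv : ∀ s ∈ Set.Ioc (0:ℝ) 1, HasDerivAt u (ud s) s)
    {S : Set ℝ} (hS : MeasurableSet S) (hsub : S ⊆ Set.Ioc 0 1) :
    AEStronglyMeasurable ud (volume.restrict S) := by
  have h : ∀ᵐ s ∂(volume.restrict S), deriv u s = ud s := by
    rw [ae_restrict_iff' hS]
    exact ae_of_all _ fun s hs => (huderiv s (hsub hs)).deriv
  exact ((measurable_deriv u).aestronglyMeasurable).congr h

lemma my_udsq_meas (huderiv : ∀ s ∈ Set.Ioc (0:ℝ) 1, HasDerivAt u (ud s) s)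
    {S : Set ℝ} (hS : MeasurableSet S) (hsub : S ⊆ Set.Ioc 0 1) :
    AEStronglyMeasurable (fun s => ud s ^ 2) (volume.restrict S) := by
  have hm := my_udmeas u ud huderiv hS hsub
  exact (hm.mul hm).congr (ae_of_all _ fun s => (pow_two (ud s)).symm)

lemma my_udsq_int
    (hderiv : ∀ x ∈ Set.Ioc (0:ℝ) 1, HasDerivAt a (ad x) x)
    (hpos : ∀ x ∈ Set.Ioc (0:ℝ) 1, 0 < a x)
    (hμ0 : 0 ≤ μ)
    (hμ : ∀ x ∈ Set.Ioc (0:ℝ) 1, x * |ad x| ≤ μ * a x)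
    (huderiv : ∀ s ∈ Set.Ioc (0:ℝ) 1, HasDerivAt u (ud s) s)
    (hud2 : MeasureTheory.IntegrableOn (fun x => a x * (ud x) ^ 2) (Set.Ioo 0 1))
    {x : ℝ} (hx : x ∈ Set.Ioo (0:ℝ) 1) :
    IntegrableOn (fun s => ud s ^ 2) (Set.Ioo x 1) := by
  have ha1 : 0 < a 1 := hpos 1 ⟨zero_lt_one, le_refl 1⟩
  set c := a 1 * x ^ μ with hcdef
  have hc : 0 < c := mul_pos ha1 (Real.rpow_pos_of_pos hx.1 μ)
  have hbig : IntegrableOn (fun s => a s * ud s ^ 2) (Set.Ioo x 1) :=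
    hud2.mono_set (Set.Ioo_subset_Ioo hx.1.le le_rfl)
  refine Integrable.mono' (hbig.const_mul c⁻¹)
    (my_udsq_meas u ud huderiv measurableSet_Ioo
      (fun s hs => ⟨lt_trans hx.1 hs.1, hs.2.le⟩)) ?_
  rw [ae_restrict_iff' measurableSet_Ioo]
  refine ae_of_all _ fun s hs => ?_
  have hs' : s ∈ Set.Ioc (0:ℝ) 1 := ⟨lt_trans hx.1 hs.1, hs.2.le⟩
  have hca : c ≤ a s := by
    have h1 : x ^ μ ≤ s ^ μ := Real.rpow_le_rpow hx.1.le hs.1.le hμ0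
    have h2 := my_low a ad μ hderiv hpos hμ s hs'
    nlinarith
  have : ‖ud s ^ 2‖ = ud s ^ 2 := by
    rw [Real.norm_eq_abs, abs_of_nonneg (sq_nonneg _)]
  rw [this]
  have hmul := mul_le_mul_of_nonneg_right hca (sq_nonneg (ud s))
  nlinarith [mul_pos (inv_pos.2 hc) hc, mul_inv_cancel₀ hc.ne',
    mul_le_mul_of_nonneg_left hmul (inv_pos.2 hc).le]

lemma my_ud_int
    (hderiv : ∀ x ∈ Set.Ioc (0:ℝ) 1, HasDerivAt a (ad x) x)
    (hpos : ∀ x ∈ Set.Ioc (0:ℝ) 1, 0 < a x)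
    (hμ0 : 0 ≤ μ)
    (hμ : ∀ x ∈ Set.Ioc (0:ℝ) 1, x * |ad x| ≤ μ * a x)
    (huderiv : ∀ s ∈ Set.Ioc (0:ℝ) 1, HasDerivAt u (ud s) s)
    (hud2 : MeasureTheory.IntegrableOn (fun x => a x * (ud x) ^ 2) (Set.Ioo 0 1))
    {x : ℝ} (hx : x ∈ Set.Ioo (0:ℝ) 1) :
    IntegrableOn ud (Set.Ioo x 1) := by
  have hsq := my_udsq_int a ad u ud μ hderiv hpos hμ0 hμ huderiv hud2 hx
  have hconst : IntegrableOn (fun _ : ℝ => (1:ℝ)) (Set.Ioo x 1) :=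
    integrableOn_const measure_Ioo_lt_top.ne
  refine Integrable.mono' (hconst.add hsq)
    (my_udmeas u ud huderiv measurableSet_Ioo
      (fun s hs => ⟨lt_trans hx.1 hs.1, hs.2.le⟩)) ?_
  refine ae_of_all _ fun s => ?_
  simp only [Pi.add_apply, Real.norm_eq_abs]
  nlinarith [sq_nonneg (|ud s| - 1), sq_abs (ud s), abs_nonneg (ud s)]

lemma my_ftc_u
    (hderiv : ∀ x ∈ Set.Ioc (0:ℝ) 1, HasDerivAt a (ad x) x)
    (hpos : ∀ x ∈ Set.Ioc (0:ℝ) 1, 0 < a x)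
    (hμ0 : 0 ≤ μ)
    (hμ : ∀ x ∈ Set.Ioc (0:ℝ) 1, x * |ad x| ≤ μ * a x)
    (huderiv : ∀ s ∈ Set.Ioc (0:ℝ) 1, HasDerivAt u (ud s) s)
    (hud2 : MeasureTheory.IntegrableOn (fun x => a x * (ud x) ^ 2) (Set.Ioo 0 1))
    {x : ℝ} (hx : x ∈ Set.Ioo (0:ℝ) 1) :
    ∫ s in x..1, ud s = u 1 - u x := by
  apply intervalIntegral.integral_eq_sub_of_hasDerivAt
  · intro s hs
    rw [Set.uIcc_of_le hx.2.le] at hs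
    exact huderiv s ⟨lt_of_lt_of_le hx.1 hs.1, hs.2⟩
  · rw [intervalIntegrable_iff_integrableOn_Ioo_of_le hx.2.le]
    exact my_ud_int a ad u ud μ hderiv hpos hμ0 hμ huderiv hud2 hx

end Aux2

section Aux3
variable (a ad u ud : ℝ → ℝ) (μ : ℝ)

lemma my_partB
    (hderiv : ∀ x ∈ Set.Ioc (0:ℝ) 1, HasDerivAt a (ad x) x)
    (hpos : ∀ x ∈ Set.Ioc (0:ℝ) 1, 0 < a x)
    (hμ0 : 0 ≤ μ) (hμ2 : μ < 2)
    (hμ : ∀ x ∈ Set.Ioc (0:ℝ) 1, x * |ad x| ≤ μ * a x)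
    (hu2 : MeasureTheory.IntegrableOn (fun x => (u x) ^ 2) (Set.Ioo 0 1))
    (huderiv : ∀ x ∈ Set.Ioc (0:ℝ) 1, HasDerivAt u (ud x) x)
    (hud2 : MeasureTheory.IntegrableOn (fun x => a x * (ud x) ^ 2) (Set.Ioo 0 1)) :
    ∫ x in Set.Ioo (0:ℝ) 1, (u x) ^ 2
      ≤ 2 * (u 1) ^ 2 + (4 / a 1) * ∫ x in Set.Ioo (0:ℝ) 1, a x * (ud x) ^ 2 := by
  have ha1 : 0 < a 1 := hpos 1 ⟨zero_lt_one, le_refl 1⟩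
  set J := ∫ x in Set.Ioo (0:ℝ) 1, a x * (ud x) ^ 2 with hJdef
  -- step: bound on tail integrals
  have key : ∀ x ∈ Set.Ioo (0:ℝ) 1,
      ∫ s in Set.Ioo x 1, (u s) ^ 2 ≤ 2 * (u 1) ^ 2 + (4 / a 1) * J := by
    intro x hx
    have hsub : Set.Ioo x 1 ⊆ Set.Ioc (0:ℝ) 1 := fun s hs => ⟨lt_trans hx.1 hs.1, hs.2.le⟩
    have hsub' : Set.Ioo x 1 ⊆ Set.Ioo (0:ℝ) 1 := Set.Ioo_subset_Ioo hx.1.le le_rfl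
    have hucont : ContinuousOn u (Set.Icc x 1) := fun s hs =>
      (huderiv s ⟨lt_of_lt_of_le hx.1 hs.1, hs.2⟩).continuousAt.continuousWithinAt
    have hum : AEStronglyMeasurable u (volume.restrict (Set.Ioo x 1)) :=
      (hucont.mono Set.Ioo_subset_Icc_self).aestronglyMeasurable measurableSet_Ioo
    have hudm := my_udmeas u ud huderiv measurableSet_Ioo hsub
    have hidm : AEStronglyMeasurable (fun s : ℝ => s) (volume.restrict (Set.Ioo x 1)) :=
      continuous_id.aestronglyMeasurable
    have hu2loc : MeasureTheory.IntegrableOn (fun s => (u s) ^ 2) (Set.Ioo x 1) :=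
      hu2.mono_set hsub'
    have hudloc := my_ud_int a ad u ud μ hderiv hpos hμ0 hμ huderiv hud2 hx
    have hudsqloc := my_udsq_int a ad u ud μ hderiv hpos hμ0 hμ huderiv hud2 hx
    obtain ⟨M, hM⟩ := isCompact_Icc.exists_bound_of_continuousOn hucont
    -- integrability of s * (2 * u s * ud s)
    have hcross : MeasureTheory.IntegrableOn (fun s => s * (2 * u s * ud s)) (Set.Ioo x 1) := by
      refine MeasureTheory.Integrable.mono' ((hudloc.abs).const_mul (2 * M))
        (hidm.mul ((hum.const_mul 2).mul hudm)) ?_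
      rw [MeasureTheory.ae_restrict_iff' measurableSet_Ioo]
      refine MeasureTheory.ae_of_all _ fun s hs => ?_
      have hMs : |u s| ≤ M := by
        have := hM s (Set.Ioo_subset_Icc_self hs)
        rwa [Real.norm_eq_abs] at this
      have hs1 : |s| ≤ 1 := abs_le.2 ⟨by linarith [hx.1, hs.1], hs.2.le⟩
      rw [Real.norm_eq_abs, abs_mul, abs_mul, abs_mul]
      have hM0 : 0 ≤ M := le_trans (abs_nonneg _) hMs
      have h2 : |(2:ℝ)| = 2 := by norm_num
      rw [h2]
      calc |s| * (2 * |u s| * |ud s|) ≤ 1 * (2 * M * |ud s|) := by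
            apply mul_le_mul hs1 _ _ zero_le_one
            · apply mul_le_mul_of_nonneg_right _ (abs_nonneg _)
              apply mul_le_mul_of_nonneg_left hMs (by norm_num)
            · positivity
        _ = 2 * M * |ud s| := by ring
    -- integrability of s^2 * ud^2
    have hsqud : MeasureTheory.IntegrableOn (fun s => s ^ 2 * (ud s) ^ 2) (Set.Ioo x 1) := by
      refine MeasureTheory.Integrable.mono' hudsqloc
        ((hidm.mul hidm).congr ?m |>.mul (my_udsq_meas u ud huderiv measurableSet_Ioo hsub)) ?_
      case m => exact MeasureTheory.ae_of_all _ fun s => (pow_two s).symm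
      rw [MeasureTheory.ae_restrict_iff' measurableSet_Ioo]
      refine MeasureTheory.ae_of_all _ fun s hs => ?_
      have hs1 : s ^ 2 ≤ 1 := by nlinarith [hx.1, hs.1, hs.2]
      have := sq_nonneg (ud s)
      rw [Real.norm_eq_abs, abs_of_nonneg (by positivity)]
      nlinarith [sq_nonneg (ud s), sq_nonneg s]
    -- FTC for s * u^2
    have hftc : ∫ s in Set.Ioo x 1, ((u s) ^ 2 + s * (2 * u s * ud s))
        = 1 * (u 1) ^ 2 - x * (u x) ^ 2 := by
      rw [← MeasureTheory.integral_Ioc_eq_integral_Ioo,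
        ← intervalIntegral.integral_of_le hx.2.le]
      have hder : ∀ s ∈ Set.uIcc x 1,
          HasDerivAt (fun t => t * u t ^ 2) (u s ^ 2 + s * (2 * u s * ud s)) s := by
        intro s hs
        rw [Set.uIcc_of_le hx.2.le] at hs
        have h1 := (huderiv s ⟨lt_of_lt_of_le hx.1 hs.1, hs.2⟩).pow 2
        norm_num at h1
        have h2 := (hasDerivAt_id s).mul h1
        rw [one_mul] at h2
        exact h2
      have hii : IntervalIntegrable (fun s => u s ^ 2 + s * (2 * u s * ud s)) volume x 1 := by
        rw [intervalIntegrable_iff_integrableOn_Ioo_of_le hx.2.le]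
        exact hu2loc.add hcross
      simpa using intervalIntegral.integral_eq_sub_of_hasDerivAt hder hii
    have hsplit : ∫ s in Set.Ioo x 1, ((u s) ^ 2 + s * (2 * u s * ud s))
        = (∫ s in Set.Ioo x 1, (u s) ^ 2) + ∫ s in Set.Ioo x 1, s * (2 * u s * ud s) :=
      MeasureTheory.integral_add hu2loc hcross
    -- Hardy expansion
    have hnn : (0:ℝ) ≤ ∫ s in Set.Ioo x 1, (s * ud s + u s / 2) ^ 2 :=
      MeasureTheory.integral_nonneg fun s => sq_nonneg _
    have hexp : ∫ s in Set.Ioo x 1, (s * ud s + u s / 2) ^ 2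
        = (∫ s in Set.Ioo x 1, s ^ 2 * (ud s) ^ 2)
          + ((2:ℝ)⁻¹ * (∫ s in Set.Ioo x 1, s * (2 * u s * ud s))
          + (4:ℝ)⁻¹ * (∫ s in Set.Ioo x 1, (u s) ^ 2)) := by
      have e1 : ∫ s in Set.Ioo x 1, (s * ud s + u s / 2) ^ 2
          = ∫ s in Set.Ioo x 1,
              (s ^ 2 * (ud s) ^ 2 + ((2:ℝ)⁻¹ * (s * (2 * u s * ud s)) + (4:ℝ)⁻¹ * (u s) ^ 2)) :=
        MeasureTheory.integral_congr_ae (MeasureTheory.ae_of_all _ fun s => by ring)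
      have hint2 : MeasureTheory.Integrable
          (fun s => (2:ℝ)⁻¹ * (s * (2 * u s * ud s)) + (4:ℝ)⁻¹ * (u s) ^ 2)
          (MeasureTheory.volume.restrict (Set.Ioo x 1)) :=
        (hcross.const_mul (2:ℝ)⁻¹).add (hu2loc.const_mul (4:ℝ)⁻¹)
      rw [e1, MeasureTheory.integral_add hsqud hint2,
        MeasureTheory.integral_add (hcross.const_mul (2:ℝ)⁻¹) (hu2loc.const_mul (4:ℝ)⁻¹),
        MeasureTheory.integral_const_mul, MeasureTheory.integral_const_mul]
    -- A ≤ J / a 1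
    have hAbound : (∫ s in Set.Ioo x 1, s ^ 2 * (ud s) ^ 2) ≤ (1 / a 1) * J := by
      have h1 : (∫ s in Set.Ioo x 1, s ^ 2 * (ud s) ^ 2)
          ≤ ∫ s in Set.Ioo x 1, (1 / a 1) * (a s * (ud s) ^ 2) := by
        apply MeasureTheory.setIntegral_mono_on hsqud
          ((hud2.mono_set hsub').const_mul _) measurableSet_Ioo
        intro s hs
        have hs' := hsub hs
        have hlow2 : a 1 * s ^ 2 ≤ a s := by
          have h2 := my_low a ad μ hderiv hpos hμ s hs'
          have h3 : s ^ (2:ℝ) ≤ s ^ μ :=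
            Real.rpow_le_rpow_of_exponent_ge hs'.1 hs'.2 hμ2.le
          rw [show ((2:ℝ)) = ((2:ℕ):ℝ) by norm_num, Real.rpow_natCast] at h3
          nlinarith [Real.rpow_pos_of_pos hs'.1 μ]
        have h4 : (a 1 * s ^ 2) * ud s ^ 2 ≤ a s * ud s ^ 2 :=
          mul_le_mul_of_nonneg_right hlow2 (sq_nonneg _)
        rw [one_div, inv_mul_eq_div, le_div_iff₀ ha1]
        nlinarith [h4]
      rw [MeasureTheory.integral_const_mul] at h1
      refine le_trans h1 ?_
      apply mul_le_mul_of_nonneg_left _ (by positivity)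
      apply MeasureTheory.setIntegral_mono_set hud2
      · filter_upwards [MeasureTheory.ae_restrict_mem measurableSet_Ioo] with s hs
        simp only [Pi.zero_apply]
        have := hpos s ⟨hs.1, hs.2.le⟩
        positivity
      · exact HasSubset.Subset.eventuallyLE hsub'
    -- combine
    have hx0 : 0 ≤ x * (u x) ^ 2 := mul_nonneg (le_of_lt hx.1) (sq_nonneg _)
    have hBv : ∫ s in Set.Ioo x 1, s * (2 * u s * ud s)
        = 1 * (u 1) ^ 2 - x * (u x) ^ 2 - ∫ s in Set.Ioo x 1, (u s) ^ 2 := by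
      rw [hsplit] at hftc; linarith
    have hc4 : (4:ℝ) / a 1 * J = 4 * (1 / a 1 * J) := by ring
    have h0 := hnn
    rw [hexp, hBv] at h0
    linarith [h0, hAbound, hx0, hc4]
  -- limit x → 0
  have hxs : ∀ n : ℕ, (1:ℝ) / (n + 2) ∈ Set.Ioo (0:ℝ) 1 := by
    intro n
    constructor
    · positivity
    · rw [div_lt_one (by positivity)]
      have : (0:ℝ) ≤ (n:ℝ) := Nat.cast_nonneg n
      linarith
  have hmono : Monotone (fun n : ℕ => Set.Ioo ((1:ℝ) / (n + 2)) 1) := by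
    intro m n hmn
    apply Set.Ioo_subset_Ioo _ le_rfl
    apply div_le_div_of_nonneg_left (by norm_num) (by positivity)
    have : (m:ℝ) ≤ (n:ℝ) := Nat.cast_le.2 hmn
    linarith
  have hunion : (⋃ n : ℕ, Set.Ioo ((1:ℝ) / (n + 2)) 1) = Set.Ioo (0:ℝ) 1 := by
    ext y
    simp only [Set.mem_iUnion, Set.mem_Ioo]
    constructor
    · rintro ⟨n, hn1, hn2⟩
      exact ⟨lt_trans (by positivity) hn1, hn2⟩
    · rintro ⟨hy0, hy1⟩
      obtain ⟨n, hn⟩ := exists_nat_gt (1 / y)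
      refine ⟨n, ?_, hy1⟩
      rw [div_lt_iff₀ (by positivity)]
      rw [div_lt_iff₀ hy0] at hn
      nlinarith
  have htend := MeasureTheory.tendsto_setIntegral_of_monotone
    (fun n : ℕ => measurableSet_Ioo) hmono (by rw [hunion]; exact hu2)
  rw [hunion] at htend
  apply le_of_tendsto htend
  filter_upwards with n using key _ (hxs n)

end Aux3

section Aux4
variable (a ad u ud : ℝ → ℝ) (μ : ℝ)

lemma my_partA
    (hderiv : ∀ x ∈ Set.Ioc (0:ℝ) 1, HasDerivAt a (ad x) x)
    (hpos : ∀ x ∈ Set.Ioc (0:ℝ) 1, 0 < a x)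
    (hμ0 : 0 ≤ μ) (hμ2 : μ < 2) (hμ1 : μ ≠ 1)
    (hμ : ∀ x ∈ Set.Ioc (0:ℝ) 1, x * |ad x| ≤ μ * a x)
    (hu2 : MeasureTheory.IntegrableOn (fun x => (u x) ^ 2) (Set.Ioo 0 1))
    (huderiv : ∀ x ∈ Set.Ioc (0:ℝ) 1, HasDerivAt u (ud x) x)
    (hud2 : MeasureTheory.IntegrableOn (fun x => a x * (ud x) ^ 2) (Set.Ioo 0 1)) :
    ∫ x in Set.Ioo (0:ℝ) 1, (u x) ^ 2
      ≤ 2 * (u 1) ^ 2 + (2 / ((2 - μ) * a 1)) * ∫ x in Set.Ioo (0:ℝ) 1, a x * (ud x) ^ 2 := by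
  have ha1 : 0 < a 1 := hpos 1 ⟨zero_lt_one, le_refl 1⟩
  have h2μ : (0:ℝ) < 2 - μ := by linarith
  have h1μ : (1:ℝ) - μ ≠ 0 := sub_ne_zero.2 hμ1.symm
  set J := ∫ x in Set.Ioo (0:ℝ) 1, a x * (ud x) ^ 2 with hJdef
  have hJ0 : 0 ≤ J := by
    apply MeasureTheory.setIntegral_nonneg measurableSet_Ioo
    intro s hs
    have := hpos s ⟨hs.1, hs.2.le⟩
    positivity
  set G : ℝ → ℝ := fun x => (1 - x ^ ((1:ℝ) - μ)) / (1 - μ) with hGdef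
  -- pointwise bound
  have hpoint : ∀ x ∈ Set.Ioo (0:ℝ) 1, (u x - u 1) ^ 2 ≤ G x * (J / a 1) := by
    intro x hx
    have hsub : Set.Ioo x 1 ⊆ Set.Ioc (0:ℝ) 1 := fun s hs => ⟨lt_trans hx.1 hs.1, hs.2.le⟩
    have hsub' : Set.Ioo x 1 ⊆ Set.Ioo (0:ℝ) 1 := Set.Ioo_subset_Ioo hx.1.le le_rfl
    have hudm := my_udmeas u ud huderiv measurableSet_Ioo hsub
    -- f and g
    set f : ℝ → ℝ := fun s => s ^ (-μ / 2) with hfdef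
    set g : ℝ → ℝ := fun s => s ^ (μ / 2) * ud s with hgdef
    have hfm : MeasureTheory.AEStronglyMeasurable f
        (MeasureTheory.volume.restrict (Set.Ioo x 1)) := by
      apply ContinuousOn.aestronglyMeasurable _ measurableSet_Ioo
      intro s hs
      exact (Real.continuousAt_rpow_const s _ (Or.inl (ne_of_gt (lt_trans hx.1 hs.1)))).continuousWithinAt
    have hgm : MeasureTheory.AEStronglyMeasurable g
        (MeasureTheory.volume.restrict (Set.Ioo x 1)) := by
      apply MeasureTheory.AEStronglyMeasurable.mul _ hudm
      apply ContinuousOn.aestronglyMeasurable _ measurableSet_Ioo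
      intro s hs
      exact (Real.continuousAt_rpow_const s _ (Or.inl (ne_of_gt (lt_trans hx.1 hs.1)))).continuousWithinAt
    -- integrability of f^2 = s^(-μ)
    have hIrpow : MeasureTheory.IntegrableOn (fun s => s ^ (-μ)) (Set.Ioo x 1) := by
      have h0 : (0:ℝ) ∉ Set.uIcc x 1 := by
        rw [Set.uIcc_of_le hx.2.le]
        intro hmem
        exact absurd hmem.1 (not_le.2 hx.1)
      have := intervalIntegral.intervalIntegrable_rpow (r := -μ) (a := x) (b := 1)
        (μ := MeasureTheory.volume) (Or.inr h0)
      rwa [intervalIntegrable_iff_integrableOn_Ioo_of_le hx.2.le] at this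
    have hf2 : MeasureTheory.Integrable (fun s => f s ^ 2)
        (MeasureTheory.volume.restrict (Set.Ioo x 1)) := by
      apply MeasureTheory.IntegrableOn.congr_fun hIrpow _ measurableSet_Ioo
      intro s hs
      have hs0 : (0:ℝ) < s := lt_trans hx.1 hs.1
      rw [hfdef]
      simp only
      rw [← Real.rpow_natCast (s ^ (-μ / 2)) 2, ← Real.rpow_mul hs0.le]
      norm_num
    -- integrability of g^2 and bound
    have hgsq : ∀ s ∈ Set.Ioo x 1, g s ^ 2 = s ^ μ * ud s ^ 2 := by
      intro s hs
      have hs0 : (0:ℝ) < s := lt_trans hx.1 hs.1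
      rw [hgdef]
      simp only
      rw [mul_pow, ← Real.rpow_natCast (s ^ (μ / 2)) 2, ← Real.rpow_mul hs0.le]
      norm_num
    have hg2 : MeasureTheory.Integrable (fun s => g s ^ 2)
        (MeasureTheory.volume.restrict (Set.Ioo x 1)) := by
      refine MeasureTheory.Integrable.mono'
        ((hud2.mono_set hsub').const_mul (1 / a 1)) ?_ ?_
      · have := hgm.mul hgm
        apply this.congr
        exact MeasureTheory.ae_of_all _ fun s => (pow_two (g s)).symm
      rw [MeasureTheory.ae_restrict_iff' measurableSet_Ioo]
      refine MeasureTheory.ae_of_all _ fun s hs => ?_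
      have hs' := hsub hs
      have hlow := my_low a ad μ hderiv hpos hμ s hs'
      rw [Real.norm_eq_abs, abs_of_nonneg (sq_nonneg _), hgsq s hs]
      have h4 : (a 1 * s ^ μ) * ud s ^ 2 ≤ a s * ud s ^ 2 :=
        mul_le_mul_of_nonneg_right hlow (sq_nonneg _)
      rw [one_div, inv_mul_eq_div, le_div_iff₀ ha1]
      nlinarith [h4]
    -- Cauchy-Schwarz
    have hcs := my_cs f g hfm hgm hf2 hg2
    -- ∫ f * g = u 1 - u x
    have hfg_eq : ∫ s in Set.Ioo x 1, f s * g s = u 1 - u x := by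
      have he : Set.EqOn (fun s => f s * g s) ud (Set.Ioo x 1) := by
        intro s hs
        have hs0 : (0:ℝ) < s := lt_trans hx.1 hs.1
        rw [hfdef, hgdef]
        simp only
        rw [← mul_assoc, ← Real.rpow_add hs0,
          show -μ / 2 + μ / 2 = (0:ℝ) by ring, Real.rpow_zero, one_mul]
      rw [MeasureTheory.setIntegral_congr_fun measurableSet_Ioo he,
        ← MeasureTheory.integral_Ioc_eq_integral_Ioo, ← intervalIntegral.integral_of_le hx.2.le]
      exact my_ftc_u a ad u ud μ hderiv hpos hμ0 hμ huderiv hud2 hx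
    -- ∫ f^2 = G x
    have hf2val : ∫ s in Set.Ioo x 1, f s ^ 2 = G x := by
      have he : Set.EqOn (fun s => f s ^ 2) (fun s => s ^ (-μ)) (Set.Ioo x 1) := by
        intro s hs
        have hs0 : (0:ℝ) < s := lt_trans hx.1 hs.1
        rw [hfdef]
        simp only
        rw [← Real.rpow_natCast (s ^ (-μ / 2)) 2, ← Real.rpow_mul hs0.le]
        norm_num
      rw [MeasureTheory.setIntegral_congr_fun measurableSet_Ioo he,
        ← MeasureTheory.integral_Ioc_eq_integral_Ioo, ← intervalIntegral.integral_of_le hx.2.le]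
      have h0 : (0:ℝ) ∉ Set.uIcc x 1 := by
        rw [Set.uIcc_of_le hx.2.le]
        intro hmem
        exact absurd hmem.1 (not_le.2 hx.1)
      rw [integral_rpow (Or.inr ⟨by intro h; exact hμ1 (by linarith [neg_eq_iff_eq_neg.1 h]), h0⟩)]
      rw [hGdef]
      simp only
      rw [Real.one_rpow, show -μ + 1 = 1 - μ by ring]
    -- ∫ g^2 ≤ J / a 1
    have hg2val : ∫ s in Set.Ioo x 1, g s ^ 2 ≤ J / a 1 := by
      have h1 : ∫ s in Set.Ioo x 1, g s ^ 2
          ≤ ∫ s in Set.Ioo x 1, (1 / a 1) * (a s * ud s ^ 2) := by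
        apply MeasureTheory.setIntegral_mono_on hg2
          ((hud2.mono_set hsub').const_mul _) measurableSet_Ioo
        intro s hs
        have hs' := hsub hs
        have hlow := my_low a ad μ hderiv hpos hμ s hs'
        rw [hgsq s hs]
        have h4 : (a 1 * s ^ μ) * ud s ^ 2 ≤ a s * ud s ^ 2 :=
          mul_le_mul_of_nonneg_right hlow (sq_nonneg _)
        rw [one_div, inv_mul_eq_div, le_div_iff₀ ha1]
        nlinarith [h4]
      rw [MeasureTheory.integral_const_mul] at h1
      refine le_trans h1 ?_
      have h5 : ∫ s in Set.Ioo x 1, a s * ud s ^ 2 ≤ J := by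
        apply MeasureTheory.setIntegral_mono_set hud2
        · filter_upwards [MeasureTheory.ae_restrict_mem measurableSet_Ioo] with s hs
          simp only [Pi.zero_apply]
          have := hpos s ⟨hs.1, hs.2.le⟩
          positivity
        · exact HasSubset.Subset.eventuallyLE hsub'
      calc (1 / a 1) * ∫ s in Set.Ioo x 1, a s * ud s ^ 2
          ≤ (1 / a 1) * J := by
            apply mul_le_mul_of_nonneg_left h5 (by positivity)
        _ = J / a 1 := by ring
    -- conclude pointwise bound
    have hf2nn : (0:ℝ) ≤ ∫ s in Set.Ioo x 1, f s ^ 2 :=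
      MeasureTheory.integral_nonneg fun s => sq_nonneg _
    have hsq : (u x - u 1) ^ 2 = (∫ s in Set.Ioo x 1, f s * g s) ^ 2 := by
      rw [hfg_eq]; ring
    calc (u x - u 1) ^ 2 = (∫ s in Set.Ioo x 1, f s * g s) ^ 2 := hsq
      _ ≤ (∫ s in Set.Ioo x 1, f s ^ 2) * ∫ s in Set.Ioo x 1, g s ^ 2 := hcs
      _ ≤ (∫ s in Set.Ioo x 1, f s ^ 2) * (J / a 1) :=
          mul_le_mul_of_nonneg_left hg2val hf2nn
      _ = G x * (J / a 1) := by rw [hf2val]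
  -- integrability of G
  have hrpowint : MeasureTheory.IntegrableOn (fun x : ℝ => x ^ ((1:ℝ) - μ)) (Set.Ioo 0 1) := by
    have := intervalIntegral.intervalIntegrable_rpow' (a := 0) (b := 1) (r := (1:ℝ) - μ) (by linarith)
    rwa [intervalIntegrable_iff_integrableOn_Ioo_of_le zero_le_one] at this
  have hconst1 : MeasureTheory.IntegrableOn (fun _ : ℝ => (1:ℝ)) (Set.Ioo (0:ℝ) 1) :=
    MeasureTheory.integrableOn_const measure_Ioo_lt_top.ne
  have hGeq : G = fun x => (1 / (1 - μ)) * (1 - x ^ ((1:ℝ) - μ)) := by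
    funext x
    rw [hGdef]
    simp only
    ring
  have hGint : MeasureTheory.IntegrableOn G (Set.Ioo (0:ℝ) 1) := by
    rw [hGeq]
    exact (hconst1.sub hrpowint).const_mul _
  -- integrability of (u - u 1)^2
  have hucont : ContinuousOn u (Set.Ioo (0:ℝ) 1) := fun s hs =>
    (huderiv s ⟨hs.1, hs.2.le⟩).continuousAt.continuousWithinAt
  have hum : MeasureTheory.AEStronglyMeasurable u
      (MeasureTheory.volume.restrict (Set.Ioo (0:ℝ) 1)) :=
    hucont.aestronglyMeasurable measurableSet_Ioo
  have hconstu : MeasureTheory.IntegrableOn (fun _ : ℝ => 2 * u 1 ^ 2) (Set.Ioo (0:ℝ) 1) :=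
    MeasureTheory.integrableOn_const measure_Ioo_lt_top.ne
  have hvint : MeasureTheory.IntegrableOn (fun x => (u x - u 1) ^ 2) (Set.Ioo (0:ℝ) 1) := by
    refine MeasureTheory.Integrable.mono' ((hu2.const_mul 2).add hconstu) ?_ ?_
    · have hm : MeasureTheory.AEStronglyMeasurable (fun x => u x - u 1)
          (MeasureTheory.volume.restrict (Set.Ioo (0:ℝ) 1)) :=
        hum.sub MeasureTheory.aestronglyMeasurable_const
      exact (hm.mul hm).congr (MeasureTheory.ae_of_all _ fun s => (pow_two _).symm)
    refine MeasureTheory.ae_of_all _ fun s => ?_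
    simp only [Pi.add_apply]
    rw [Real.norm_eq_abs, abs_of_nonneg (sq_nonneg _)]
    nlinarith [sq_nonneg (u s + u 1)]
  -- value of ∫ G
  have hexpne : (1:ℝ) - μ + 1 ≠ 0 := by
    intro h
    rw [show (1:ℝ) - μ + 1 = 2 - μ by ring] at h
    exact absurd h (ne_of_gt h2μ)
  have hrpowval : ∫ x in Set.Ioo (0:ℝ) 1, x ^ ((1:ℝ) - μ) = 1 / (2 - μ) := by
    rw [← MeasureTheory.integral_Ioc_eq_integral_Ioo, ← intervalIntegral.integral_of_le zero_le_one,
      integral_rpow (Or.inl (by linarith))]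
    rw [Real.one_rpow, Real.zero_rpow hexpne, show (1:ℝ) - μ + 1 = 2 - μ by ring]
    ring
  have hGval : ∫ x in Set.Ioo (0:ℝ) 1, G x = 1 / ((1 - μ)) * (1 - 1 / (2 - μ)) := by
    rw [hGeq]
    rw [MeasureTheory.integral_const_mul, MeasureTheory.integral_sub hconst1 hrpowint]
    rw [MeasureTheory.setIntegral_const, Real.volume_real_Ioo, hrpowval]
    norm_num
  -- put everything together
  have hmono2 : ∫ x in Set.Ioo (0:ℝ) 1, (u x - u 1) ^ 2
      ≤ ∫ x in Set.Ioo (0:ℝ) 1, G x * (J / a 1) := by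
    apply MeasureTheory.setIntegral_mono_on hvint (hGint.mul_const _) measurableSet_Ioo hpoint
  have hmono2' : ∫ x in Set.Ioo (0:ℝ) 1, (u x - u 1) ^ 2
      ≤ (1 / (1 - μ) * (1 - 1 / (2 - μ))) * (J / a 1) := by
    refine le_trans hmono2 ?_
    rw [MeasureTheory.integral_mul_const, hGval]
  have hcomb : MeasureTheory.IntegrableOn
      (fun x => 2 * (u x - u 1) ^ 2 + 2 * u 1 ^ 2) (Set.Ioo (0:ℝ) 1) :=
    (hvint.const_mul 2).add hconstu
  have hfinal : ∫ x in Set.Ioo (0:ℝ) 1, (u x) ^ 2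
      ≤ ∫ x in Set.Ioo (0:ℝ) 1, (2 * (u x - u 1) ^ 2 + 2 * u 1 ^ 2) := by
    apply MeasureTheory.setIntegral_mono_on hu2 hcomb measurableSet_Ioo
    intro s hs
    nlinarith [sq_nonneg (u s - 2 * u 1), sq_nonneg (u s - u 1), sq_nonneg (u s + u 1)]
  have hsplit2 : ∫ x in Set.Ioo (0:ℝ) 1, (2 * (u x - u 1) ^ 2 + 2 * u 1 ^ 2)
      = 2 * (∫ x in Set.Ioo (0:ℝ) 1, (u x - u 1) ^ 2) + 2 * u 1 ^ 2 := by
    rw [MeasureTheory.integral_add (hvint.const_mul 2) hconstu,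
      MeasureTheory.integral_const_mul, MeasureTheory.setIntegral_const, Real.volume_real_Ioo]
    norm_num
  have heq : 2 * ((1 / (1 - μ) * (1 - 1 / (2 - μ))) * (J / a 1)) + 2 * u 1 ^ 2
      = 2 * (u 1) ^ 2 + (2 / ((2 - μ) * a 1)) * J := by
    field_simp
    ring
  linarith [hfinal, hsplit2, hmono2', heq]

end Aux4

theorem poincare_without_boundary_condition
    (a ad : ℝ → ℝ) (μ : ℝ)
    (hcont : ContinuousOn a (Set.Icc 0 1))
    (hderiv : ∀ x ∈ Set.Ioc (0:ℝ) 1, HasDerivAt a (ad x) x)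
    (hpos : ∀ x ∈ Set.Ioc (0:ℝ) 1, 0 < a x)
    (ha0 : a 0 = 0)
    (hμ0 : 0 ≤ μ) (hμ2 : μ < 2)
    (hμ : ∀ x ∈ Set.Ioc (0:ℝ) 1, x * |ad x| ≤ μ * a x)
    (u ud : ℝ → ℝ)
    (hu2 : MeasureTheory.IntegrableOn (fun x => (u x) ^ 2) (Set.Ioo 0 1))
    (huderiv : ∀ x ∈ Set.Ioc (0:ℝ) 1, HasDerivAt u (ud x) x)
    (hud2 : MeasureTheory.IntegrableOn (fun x => a x * (ud x) ^ 2) (Set.Ioo 0 1)) :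
    ∫ x in Set.Ioo (0:ℝ) 1, (u x) ^ 2
      ≤ 2 * (u 1) ^ 2 + ((1 / a 1) * min 4 (2 / (2 - μ)))
          * ∫ x in Set.Ioo (0:ℝ) 1, a x * (ud x) ^ 2 := by
  have ha1 : 0 < a 1 := hpos 1 ⟨zero_lt_one, le_refl 1⟩
  have h2μ : (0:ℝ) < 2 - μ := by linarith
  set J := ∫ x in Set.Ioo (0:ℝ) 1, a x * (ud x) ^ 2 with hJdef
  have hJ0 : 0 ≤ J := by
    apply MeasureTheory.setIntegral_nonneg measurableSet_Ioo
    intro s hs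
    have := hpos s ⟨hs.1, hs.2.le⟩
    positivity
  have hB := my_partB a ad u ud μ hderiv hpos hμ0 hμ2 hμ hu2 huderiv hud2
  have hA : ∫ x in Set.Ioo (0:ℝ) 1, (u x) ^ 2
      ≤ 2 * (u 1) ^ 2 + (2 / ((2 - μ) * a 1)) * J := by
    by_cases hμ1 : μ = 1
    · subst hμ1
      -- approximate with μₙ = 1 + 1/(n+2)
      have hbound : ∀ n : ℕ, ∫ x in Set.Ioo (0:ℝ) 1, (u x) ^ 2
          ≤ 2 * (u 1) ^ 2 + (2 / ((2 - (1 + 1/((n:ℝ)+2))) * a 1)) * J := by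
        intro n
        have hn2 : (0:ℝ) < (n:ℝ) + 2 := by positivity
        have hfrac0 : (0:ℝ) < 1/((n:ℝ)+2) := by positivity
        have hfrac1 : 1/((n:ℝ)+2) ≤ 1/2 := by
          rw [div_le_div_iff₀ hn2 (by norm_num)]
          have : (0:ℝ) ≤ (n:ℝ) := Nat.cast_nonneg n
          linarith
        apply my_partA a ad u ud (1 + 1/((n:ℝ)+2)) hderiv hpos (by linarith) (by linarith)
          (by intro h; nlinarith) _ hu2 huderiv hud2
        intro x hx
        have h1 := hμ x hx
        have hax := hpos x hx
        nlinarith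
      have hlim : Filter.Tendsto
          (fun n : ℕ => 2 * (u 1) ^ 2 + (2 / ((2 - (1 + 1/((n:ℝ)+2))) * a 1)) * J)
          Filter.atTop (nhds (2 * (u 1) ^ 2 + (2 / ((2 - (1 + 0)) * a 1)) * J)) := by
        apply Filter.Tendsto.const_add
        apply Filter.Tendsto.mul_const
        apply Filter.Tendsto.div tendsto_const_nhds
        · apply Filter.Tendsto.mul_const
          apply Filter.Tendsto.const_sub
          apply Filter.Tendsto.const_add
          have h1 : Filter.Tendsto (fun n : ℕ => ((n:ℝ)+2)) Filter.atTop Filter.atTop :=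
            Filter.tendsto_atTop_add_const_right _ 2 tendsto_natCast_atTop_atTop
          have h2 := h1.inv_tendsto_atTop
          exact h2.congr (fun n => by simp [one_div])
        · norm_num
          exact ha1.ne'
      have := ge_of_tendsto hlim (Filter.Eventually.of_forall hbound)
      norm_num at this ⊢
      linarith [this]
    · exact my_partA a ad u ud μ hderiv hpos hμ0 hμ2 hμ1 hμ hu2 huderiv hud2
  rcases min_cases (4:ℝ) (2 / (2 - μ)) with ⟨hmin, _⟩ | ⟨hmin, _⟩
  · rw [hmin]
    have he : (1 / a 1) * 4 = 4 / a 1 := by ring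
    rw [he]
    exact hB
  · rw [hmin]
    have he : (1 / a 1) * (2 / (2 - μ)) = 2 / ((2 - μ) * a 1) := by
      rw [div_mul_div_comm, one_mul, mul_comm (a 1) (2 - μ)]
    rw [he]
    exact hA
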